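/- For every λ>0 there exists γ₀>0 such that the following holds for all γ∈(0,γ₀) with (2γ)^{-1} a positive even integer and for every positive integer ℓ_− with δ_−:=γℓ_− ≤ 1/100: for all u,v∈ℓ_−ℤ with u≠v and all x∈[u,u+ℓ_−)∩ℤ, y∈[v,v+ℓ_−)∩ℤ with x≠y, one has |J_γ(|x−y|) − J_γ(|u−v|)| ≤ γ·𝟙[ ||u−v|−(2γ)^{-1}| ≤ 2ℓ_− ] + (8λℓ_−/|u−v|³)·𝟙[ |u−v| > (2γ)^{-1} − 2ℓ_− ]. -/

import Mathlib

/-- The Kac coupling with long-range tail: `J_γ(r) = γ` if `|r| ≤ (2γ)⁻¹` and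
`J_γ(r) = λ/r²` otherwise. -/
noncomputable def coupling (lam gam : ℝ) (r : ℝ) : ℝ :=
  if |r| ≤ (2 * gam)⁻¹ then gam else lam / r ^ 2

private lemma coupling_quad_aux (d D : ℝ) (hd : 0 < d) (hD : 0 < D)
    (h49 : 49 * D ≤ 50 * d) : (D + d) * D ≤ 8 * d ^ 2 := by
  nlinarith [mul_nonneg (by linarith : (0:ℝ) ≤ 50*d - 49*D) hd.le,
    mul_nonneg (by linarith : (0:ℝ) ≤ 50*d - 49*D) hD.le, sq_nonneg D]

set_option maxHeartbeats 2000000 in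
/-- **Block comparison of the coupling on the `ℓ₋`-grid.** For every `λ > 0` there is
`γ₀ > 0` such that for all `γ ∈ (0, γ₀)` with `(2γ)⁻¹` a positive even integer, and every
positive integer `ℓ₋` with `δ₋ := γ ℓ₋ ≤ 1/100`: for all `u,v ∈ ℓ₋ℤ` with `u ≠ v` and all
`x ∈ [u, u+ℓ₋) ∩ ℤ`, `y ∈ [v, v+ℓ₋) ∩ ℤ` with `x ≠ y`,
`|J_γ(|x−y|) − J_γ(|u−v|)| ≤ γ·𝟙[||u−v| − (2γ)⁻¹| ≤ 2ℓ₋] + (8λℓ₋/|u−v|³)·𝟙[|u−v| > (2γ)⁻¹ − 2ℓ₋]`. -/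
theorem coupling_block_comparison (lam : ℝ) (hlam : 0 < lam) :
    ∃ γ₀ : ℝ, 0 < γ₀ ∧
      ∀ gam : ℝ, 0 < gam → gam < γ₀ →
      (∃ M : ℕ, 0 < M ∧ Even M ∧ (M : ℝ) = (2 * gam)⁻¹) →
      ∀ ℓm : ℕ, 0 < ℓm → gam * ℓm ≤ 1 / 100 →
      ∀ a b : ℤ, a ≠ b →
      ∀ x y : ℤ, x ∈ Set.Ico (a * (ℓm : ℤ)) (a * (ℓm : ℤ) + ℓm) →
        y ∈ Set.Ico (b * (ℓm : ℤ)) (b * (ℓm : ℤ) + ℓm) → x ≠ y →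
      abs (coupling lam gam (abs ((x : ℝ) - (y : ℝ))) -
           coupling lam gam (abs ((a * (ℓm : ℤ) : ℝ) - (b * (ℓm : ℤ) : ℝ))))
        ≤ (if abs (abs ((a * (ℓm : ℤ) : ℝ) - (b * (ℓm : ℤ) : ℝ)) - (2 * gam)⁻¹) ≤ 2 * ℓm
             then gam else 0)
          + (if abs ((a * (ℓm : ℤ) : ℝ) - (b * (ℓm : ℤ) : ℝ)) > (2 * gam)⁻¹ - 2 * ℓm
             then 8 * lam * ℓm / abs ((a * (ℓm : ℤ) : ℝ) - (b * (ℓm : ℤ) : ℝ)) ^ 3 else 0) := by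
  refine ⟨(4*lam)⁻¹, by positivity, ?_⟩
  intro gam hg hg0 _hMex ℓm hℓ hδ a b hab x y hx hy hxy
  simp only [coupling, abs_abs]
  have h2g : (0:ℝ) < 2*gam := by linarith
  have hL1 : (1:ℝ) ≤ (ℓm:ℝ) := by exact_mod_cast hℓ
  set Mr := (2*gam)⁻¹ with hMrdef
  have hMrpos : 0 < Mr := by positivity
  have hgMr : gam * Mr = 1/2 := by rw [hMrdef]; field_simp
  have hMr : 2*lam < Mr := by
    rw [hMrdef, inv_eq_one_div, lt_div_iff₀ h2g]
    have h4 : (4*lam)⁻¹ * (4*lam) = 1 := inv_mul_cancel₀ (by positivity)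
    nlinarith [hg0]
  have hℓM : 50 * (ℓm:ℝ) ≤ Mr := by
    rw [hMrdef, inv_eq_one_div, le_div_iff₀ h2g]
    nlinarith [hδ]
  set d := |(x:ℝ) - (y:ℝ)| with hd_def
  set U := ((a * (ℓm : ℤ) : ℝ)) with hU
  set V := ((b * (ℓm : ℤ) : ℝ)) with hV
  set D := |U - V| with hD_def
  have key_d : 1 ≤ d := by
    have h1 : (1:ℤ) ≤ |x - y| := Int.one_le_abs (sub_ne_zero.mpr hxy)
    have h2 : ((1:ℤ):ℝ) ≤ ((|x - y| : ℤ) : ℝ) := by exact_mod_cast h1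
    rw [hd_def]; push_cast at h2; linarith
  have key_D : (ℓm:ℝ) ≤ D := by
    have h1 : (1:ℤ) ≤ |a - b| := Int.one_le_abs (sub_ne_zero.mpr hab)
    have h2 : (ℓm:ℤ) ≤ |a * (ℓm:ℤ) - b * (ℓm:ℤ)| := by
      rw [← sub_mul, abs_mul, abs_of_nonneg (by positivity : (0:ℤ) ≤ (ℓm:ℤ))]
      nlinarith [hℓ]
    have h3 : ((ℓm:ℤ):ℝ) ≤ ((|a * (ℓm:ℤ) - b * (ℓm:ℤ)| : ℤ) : ℝ) := by exact_mod_cast h2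
    rw [hD_def, hU, hV]; push_cast at h3 ⊢; convert h3 using 2 <;> push_cast <;> ring
  have hdpos : 0 < d := by linarith
  have hDpos : 0 < D := by linarith
  have hdD : |d - D| ≤ (ℓm:ℝ) := by
    have h1 : ((x:ℝ) - y) - (U - V) = ((x:ℝ) - U) - ((y:ℝ) - V) := by ring
    have hx1 : U ≤ (x:ℝ) := by rw [hU]; exact_mod_cast hx.1
    have hx2 : (x:ℝ) < U + ℓm := by
      rw [hU]; have := hx.2; push_cast; exact_mod_cast this
    have hy1 : V ≤ (y:ℝ) := by rw [hV]; exact_mod_cast hy.1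
    have hy2 : (y:ℝ) < V + ℓm := by
      rw [hV]; have := hy.2; push_cast; exact_mod_cast this
    have hb : |((x:ℝ) - y) - (U - V)| ≤ (ℓm:ℝ) := by
      rw [abs_le]; constructor <;> [linarith; linarith]
    calc |d - D| ≤ |((x:ℝ) - y) - (U - V)| := abs_abs_sub_abs_le_abs_sub _ _
      _ ≤ (ℓm:ℝ) := hb
  have hdD' := abs_le.mp hdD
  -- helper: tail value below gam beyond Mr
  have tail_le : ∀ r : ℝ, Mr < r → lam / r^2 ≤ gam := by
    intro r hr
    rw [div_le_iff₀ (by nlinarith)]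
    nlinarith [hgMr, hMr, hMrpos, mul_pos hg hMrpos]
  by_cases hdM : d ≤ Mr <;> by_cases hDM : D ≤ Mr
  · rw [if_pos hdM, if_pos hDM, sub_self, abs_zero]
    have : (0:ℝ) ≤ 8 * lam * ℓm / D ^ 3 := by positivity
    split_ifs <;> linarith
  · -- d ≤ Mr < D : mixed
    push_neg at hDM
    rw [if_pos hdM, if_neg (not_le.mpr hDM)]
    have ht := tail_le D hDM
    have h0 : (0:ℝ) ≤ lam / D^2 := by positivity
    have habs : |gam - lam / D^2| ≤ gam := by
      rw [abs_of_nonneg (by linarith)]; linarith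
    rw [if_pos (by rw [abs_le]; constructor <;> linarith),
        if_pos (by linarith : D > Mr - 2*ℓm)]
    have : (0:ℝ) ≤ 8 * lam * ℓm / D ^ 3 := by positivity
    linarith
  · -- D ≤ Mr < d : mixed
    push_neg at hdM
    rw [if_neg (not_le.mpr hdM), if_pos hDM]
    have ht := tail_le d hdM
    have h0 : (0:ℝ) ≤ lam / d^2 := by positivity
    have habs : |lam / d^2 - gam| ≤ gam := by
      rw [abs_sub_comm, abs_of_nonneg (by linarith)]; linarith
    rw [if_pos (by rw [abs_le]; constructor <;> linarith),
        if_pos (by linarith : D > Mr - 2*ℓm)]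
    have : (0:ℝ) ≤ 8 * lam * ℓm / D ^ 3 := by positivity
    linarith
  · -- both beyond Mr
    push_neg at hdM hDM
    rw [if_neg (not_le.mpr hdM), if_neg (not_le.mpr hDM)]
    have hD50 : 50 * (ℓm:ℝ) ≤ D := by linarith
    have h49 : 49*D ≤ 50*d := by linarith [hdD'.1]
    have quad : (D + d) * D ≤ 8 * d^2 := coupling_quad_aux d D hdpos hDpos h49
    have hmain : |lam / d^2 - lam / D^2| ≤ 8 * lam * ℓm / D ^ 3 := by
      rw [div_sub_div _ _ (by positivity : d^2 ≠ 0) (by positivity : D^2 ≠ 0),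
          abs_div, abs_of_pos (by positivity : (0:ℝ) < d^2 * D^2),
          div_le_div_iff₀ (by positivity) (by positivity : (0:ℝ) < D^3)]
      have hnum : |lam * D^2 - d^2 * lam| ≤ lam * ((ℓm:ℝ) * (D + d)) := by
        have he : lam * D^2 - d^2 * lam = lam * ((D - d) * (D + d)) := by ring
        rw [he, abs_mul, abs_of_pos hlam, abs_mul,
            abs_of_pos (by linarith : (0:ℝ) < D + d)]
        have hDd : |D - d| ≤ (ℓm:ℝ) := by rw [abs_sub_comm]; exact hdD
        gcongr
      calc |lam * D^2 - d^2 * lam| * D^3 ≤ (lam * ((ℓm:ℝ) * (D + d))) * D^3 := by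
            gcongr
        _ = (lam * (ℓm:ℝ) * D^2) * ((D + d) * D) := by ring
        _ ≤ (lam * (ℓm:ℝ) * D^2) * (8 * d^2) := by gcongr
        _ = 8 * lam * (ℓm:ℝ) * (d^2 * D^2) := by ring
    rw [if_pos (by linarith : D > Mr - 2*ℓm)]
    have : |lam / d^2 - lam / D^2| ≤
        (if |D - Mr| ≤ 2*(ℓm:ℝ) then gam else 0) + 8 * lam * ℓm / D ^ 3 := by
      split_ifs <;> [linarith; linarith]
    exact this
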